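/- For every κ > 1 and every E > 0, the strict inequality 2·g((κ − 1/2)E + κ − 1) − g(κE + κ − 1) − g((κ−1)(E+1)) < 2·g(E/2) − g(E) holds. -/

import Mathlib

noncomputable def g (x : ℝ) : ℝ := (x + 1) * Real.log (x + 1) - x * Real.log x

lemma g_hasDeriv {x : ℝ} (hx : 0 < x) :
    HasDerivAt g (Real.log (x + 1) - Real.log x) x := by
  have h1 : HasDerivAt (fun y : ℝ => (y + 1) * Real.log (y + 1)) (Real.log (x + 1) + 1) x := by
    have hu : HasDerivAt (fun y : ℝ => y + 1) 1 x := (hasDerivAt_id x).add_const 1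
    have hl : HasDerivAt (fun y : ℝ => Real.log (y + 1)) ((x + 1)⁻¹ * 1) x :=
      (Real.hasDerivAt_log (by positivity)).comp x hu
    have h := hu.mul hl
    refine h.congr_deriv ?_
    field_simp
  have h2 : HasDerivAt (fun y : ℝ => y * Real.log y) (Real.log x + 1) x := by
    have h := (hasDerivAt_id x).mul (Real.hasDerivAt_log hx.ne')
    refine h.congr_deriv ?_
    field_simp
    rw [id_eq]; ring
  have h := h1.sub h2
  show HasDerivAt (fun y : ℝ => (y + 1) * Real.log (y + 1) - y * Real.log y) _ x
  refine h.congr_deriv ?_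
  ring

lemma g_cont : Continuous g := by
  have h := Real.continuous_mul_log
  have h1 : Continuous fun x : ℝ => (x + 1) * Real.log (x + 1) :=
    h.comp (continuous_id.add continuous_const)
  exact h1.sub h

lemma midpoint_ineq {b c : ℝ} (hc : 0 < c) (hcb : c < b) :
    2 * (Real.log ((b + c) / 2 + 1) - Real.log ((b + c) / 2)) <
      (Real.log (b + 1) - Real.log b) + (Real.log (c + 1) - Real.log c) := by
  set m := (b + c) / 2 with hm
  have hb : 0 < b := hc.trans hcb
  have hm0 : 0 < m := by simp [hm]; linarith
  have hbc : b * c < m ^ 2 := by nlinarith [sq_nonneg (b - c)]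
  have key : (m + 1) * ((m + 1) * (b * c)) < m * (m * ((b + 1) * (c + 1))) := by nlinarith
  have hlog := Real.log_lt_log (by positivity) key
  rw [Real.log_mul (by positivity) (by positivity), Real.log_mul (by positivity) (by positivity),
    Real.log_mul (by positivity) (by positivity), Real.log_mul (by positivity) (by positivity),
    Real.log_mul (by positivity) (by positivity), Real.log_mul (by positivity) (by positivity)]
    at hlog
  linarith

/-- for `κ > 1` and `E > 0`,
`2g((κ−1/2)E + κ−1) − g(κE + κ−1) − g((κ−1)(E+1)) < 2g(E/2) − g(E)`. -/
theorem strict_separation (κ E : ℝ) (hκ : 1 < κ) (hE : 0 < E) :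
    2 * g ((κ - 1 / 2) * E + κ - 1) - g (κ * E + κ - 1) - g ((κ - 1) * (E + 1)) <
      2 * g (E / 2) - g E := by
  set F : ℝ → ℝ := fun t => 2 * g ((t - 1 / 2) * E + t - 1) - g (t * E + t - 1) -
    g ((t - 1) * (E + 1)) with hF
  have hFcont : ContinuousOn F (Set.Ici 1) := by
    apply Continuous.continuousOn
    apply Continuous.sub
    apply Continuous.sub
    · exact (continuous_const.mul (g_cont.comp (by continuity)))
    · exact g_cont.comp (by continuity)
    · exact g_cont.comp (by continuity)
  have hderiv : ∀ t ∈ interior (Set.Ici (1 : ℝ)), deriv F t < 0 := by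
    rw [interior_Ici]
    intro t ht
    rw [Set.mem_Ioi] at ht
    set b := t * E + t - 1 with hbdef
    set c := (t - 1) * (E + 1) with hcdef
    set a := (t - 1 / 2) * E + t - 1 with hadef
    have hc : 0 < c := by rw [hcdef]; nlinarith
    have hcb : c < b := by rw [hbdef, hcdef]; nlinarith
    have hb : 0 < b := hc.trans hcb
    have ha : 0 < a := by rw [hadef]; nlinarith
    have haff_a : HasDerivAt (fun t : ℝ => (t - 1 / 2) * E + t - 1) (E + 1) t := by
      have h := ((((hasDerivAt_id t).sub_const (1 / 2)).mul_const E).add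
        (hasDerivAt_id t)).sub_const 1
      exact h.congr_deriv (by ring)
    have haff_b : HasDerivAt (fun t : ℝ => t * E + t - 1) (E + 1) t := by
      have h := (((hasDerivAt_id t).mul_const E).add (hasDerivAt_id t)).sub_const 1
      exact h.congr_deriv (by ring)
    have haff_c : HasDerivAt (fun t : ℝ => (t - 1) * (E + 1)) (E + 1) t := by
      have h := ((hasDerivAt_id t).sub_const 1).mul_const (E + 1)
      exact h.congr_deriv (by ring)
    have hga : HasDerivAt (fun t : ℝ => g ((t - 1 / 2) * E + t - 1))
        ((Real.log (a + 1) - Real.log a) * (E + 1)) t :=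
        HasDerivAt.comp (h₂ := g) t (g_hasDeriv ha) haff_a
    have hgb : HasDerivAt (fun t : ℝ => g (t * E + t - 1))
        ((Real.log (b + 1) - Real.log b) * (E + 1)) t :=
        HasDerivAt.comp (h₂ := g) t (g_hasDeriv hb) haff_b
    have hgc : HasDerivAt (fun t : ℝ => g ((t - 1) * (E + 1)))
        ((Real.log (c + 1) - Real.log c) * (E + 1)) t :=
        HasDerivAt.comp (h₂ := g) t (g_hasDeriv hc) haff_c
    have hFd : HasDerivAt F
        (2 * ((Real.log (a + 1) - Real.log a) * (E + 1)) -
          (Real.log (b + 1) - Real.log b) * (E + 1) -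
          (Real.log (c + 1) - Real.log c) * (E + 1)) t :=
      ((hga.const_mul 2).sub hgb).sub hgc
    rw [hFd.deriv]
    have hab : a = (b + c) / 2 := by rw [hadef, hbdef, hcdef]; ring
    have key := midpoint_ineq hc hcb
    rw [← hab] at key
    nlinarith
  have anti := StrictAntiOn.mono (strictAntiOn_of_deriv_neg (convex_Ici 1) hFcont hderiv)
    (le_refl _)
  have h1 := (strictAntiOn_of_deriv_neg (convex_Ici 1) hFcont hderiv)
    (Set.self_mem_Ici) (Set.mem_Ici.mpr hκ.le) hκ
  have hF1 : F 1 = 2 * g (E / 2) - g E := by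
    rw [hF]
    norm_num
    rw [show (1 : ℝ) / 2 * E = E / 2 by ring]
    simp [g]
  rw [hF1] at h1
  exact h1
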